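/- For w ≥ 3 and a ∈ [0, 1/10], the function T(w) = 4(w+1)(aw+1)·log(w+1) − 2aw(a(w+3)+w+1)·log(2/a) is nonnegative. -/
import Mathlib


/-- For w ≥ 3 and a ∈ [0, 1/10]:
4(w+1)(aw+1)log(w+1) − 2aw(a(w+3)+w+1)log(2/a) ≥ 0. -/
theorem stmt14 (a w : ℝ) (ha : a ∈ Set.Icc (0:ℝ) (1 / 10)) (hw : 3 ≤ w) :
    0 ≤ 4 * (w + 1) * (a * w + 1) * Real.log (w + 1) -
      2 * a * w * (a * (w + 3) + w + 1) * Real.log (2 / a) := by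
  obtain ⟨ha0, ha1⟩ := ha
  have hw1 : (0:ℝ) < w + 1 := by linarith
  have hL0 : 0 ≤ Real.log (w + 1) := Real.log_nonneg (by linarith)
  rcases eq_or_lt_of_le ha0 with h0 | ha0
  · subst h0
    simp only [zero_mul, mul_zero]
    nlinarith [hL0, hw1]
  -- a > 0 case
  set L := Real.log (w + 1) with hLdef
  set s := a * (w + 1) with hsdef
  have hs0 : 0 < s := by positivity
  set X := Real.log (2 / s) with hXdef
  have hsplit : Real.log (2 / a) = L + X := by
    have h2a : 2 / a = (w + 1) * (2 / s) := by
      field_simp [hsdef]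
      ring
    rw [h2a, Real.log_mul (by positivity) (by positivity)]
  -- log(2/a) ≥ 0 since 2/a ≥ 20
  have hM0 : 0 ≤ L + X := by
    rw [← hsplit]
    apply Real.log_nonneg
    rw [le_div_iff₀ ha0]
    linarith
  -- key bound s * X ≤ 2 - s
  have hsX : s * X ≤ 2 - s := by
    have h1 : Real.log (2 / s) ≤ 2 / s - 1 :=
      Real.log_le_sub_one_of_pos (by positivity)
    have h2 : s * (2 / s) = 2 := by field_simp
    nlinarith [h1, hs0]
  -- L ≥ log 4 ≥ 1.38
  have hL : (1.38 : ℝ) ≤ L := by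
    have h4 : Real.log 4 ≤ L := Real.log_le_log (by norm_num) (by linarith)
    have hl2 : (0.6931471803 : ℝ) < Real.log 2 := Real.log_two_gt_d9
    have h42 : Real.log 4 = 2 * Real.log 2 := by
      rw [show (4:ℝ) = 2 ^ 2 by norm_num, Real.log_pow]
      push_cast; ring
    linarith
  rw [hsplit]
  -- Step A: 2aw(a(w+3)+w+1) ≤ (12/5) a (w+1)^2
  have hA : 2 * a * w * (a * (w + 3) + w + 1) ≤ (12/5) * a * (w + 1)^2 := by
    have k1 : 0 ≤ a * (1/10 - a) * (w * (w + 3)) :=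
      mul_nonneg (mul_nonneg ha0.le (by linarith)) (by nlinarith)
    have k2 : 0 ≤ a * (w * w / 10 + 11 * w / 10 + 6 / 5) :=
      mul_nonneg ha0.le (by nlinarith)
    nlinarith [k1, k2]
  -- Step C: (12/5) a (w+1)^2 (L+X) ≤ (w+1) * ((3*s+4)*L)
  have hC : (12/5) * a * (w + 1)^2 * (L + X) ≤ (w + 1) * ((3 * s + 4) * L) := by
    have key : (12/5) * s * (L + X) ≤ (3 * s + 4) * L := by
      nlinarith [hsX, hL, hs0, mul_nonneg hs0.le hL0]
    calc (12/5) * a * (w + 1)^2 * (L + X) = (w + 1) * ((12/5) * s * (L + X)) := by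
          rw [hsdef]; ring
      _ ≤ (w + 1) * ((3 * s + 4) * L) := by
          apply mul_le_mul_of_nonneg_left key hw1.le
  -- Step B: (w+1)(3s+4)L ≤ 4(w+1)(aw+1)L
  have hB : (w + 1) * ((3 * s + 4) * L) ≤ 4 * (w + 1) * (a * w + 1) * L := by
    have h : 3 * s + 4 ≤ 4 * (a * w + 1) := by
      rw [hsdef]; nlinarith
    nlinarith [mul_nonneg (mul_nonneg hw1.le hL0) (sub_nonneg.mpr h)]
  have hfinal : 2 * a * w * (a * (w + 3) + w + 1) * (L + X) ≤
      (12/5) * a * (w + 1)^2 * (L + X) :=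
    mul_le_mul_of_nonneg_right hA hM0
  linarith
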